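/- Let n ≥ 2. The Wada representations ρ^{(2)} : Bₙ → Aut(Fₙ) and ρ^{(3)} : Bₙ → Aut(Fₙ) are equivalent: there exist automorphisms φ : Fₙ → Fₙ and μ : Bₙ → Bₙ such that ρ^{(2)}(μ(β)) = φ⁻¹ ∘ ρ^{(3)}(β) ∘ φ for all β ∈ Bₙ. Indeed, one may take φ determined by φ(xᵢ) = y_{n−i+1} where yᵢ = x₁² x₂² ⋯ x_{i−1}² xᵢ, and μ determined by μ(σᵢ) = σ_{n−i}. -/
import Mathlib


def braidRels (m : ℕ) : Set (FreeGroup (Fin m)) :=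
  { r | (∃ i j : Fin m, (i : ℕ) + 1 = (j : ℕ) ∧
          r = FreeGroup.of i * FreeGroup.of j * FreeGroup.of i *
              (FreeGroup.of j * FreeGroup.of i * FreeGroup.of j)⁻¹) ∨
        (∃ i j : Fin m, (i : ℕ) + 2 ≤ (j : ℕ) ∧
          r = FreeGroup.of i * FreeGroup.of j * (FreeGroup.of j * FreeGroup.of i)⁻¹) }

abbrev BraidGroup (m : ℕ) : Type := PresentedGroup (braidRels m)

def braidGen {m : ℕ} (i : Fin m) : BraidGroup m := PresentedGroup.of i

def idx0 {n : ℕ} (k : Fin (n - 1)) : Fin n := ⟨k.1, by have := k.2; omega⟩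
def idx1 {n : ℕ} (k : Fin (n - 1)) : Fin n := ⟨k.1 + 1, by have := k.2; omega⟩


/-- Wada's representation of type (1) with parameter `h`:
`σ_k ↦ (x_k ↦ x_k^{-h} x_{k+1} x_k^h, x_{k+1} ↦ x_k)`. -/
def IsWada1 {n : ℕ} (h : ℤ) (ρ : BraidGroup (n - 1) →* MulAut (FreeGroup (Fin n))) : Prop :=
  ∀ k : Fin (n - 1),
    ρ (braidGen k) (FreeGroup.of (idx0 k)) =
      (FreeGroup.of (idx0 k)) ^ (-h) * FreeGroup.of (idx1 k) * (FreeGroup.of (idx0 k)) ^ h ∧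
    ρ (braidGen k) (FreeGroup.of (idx1 k)) = FreeGroup.of (idx0 k) ∧
    ∀ j : Fin n, j ≠ idx0 k → j ≠ idx1 k → ρ (braidGen k) (FreeGroup.of j) = FreeGroup.of j

/-- Wada's representation of type (2):
`σ_k ↦ (x_k ↦ x_k x_{k+1}⁻¹ x_k, x_{k+1} ↦ x_k)`. -/
def IsWada2 {n : ℕ} (ρ : BraidGroup (n - 1) →* MulAut (FreeGroup (Fin n))) : Prop :=
  ∀ k : Fin (n - 1),
    ρ (braidGen k) (FreeGroup.of (idx0 k)) =
      FreeGroup.of (idx0 k) * (FreeGroup.of (idx1 k))⁻¹ * FreeGroup.of (idx0 k) ∧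
    ρ (braidGen k) (FreeGroup.of (idx1 k)) = FreeGroup.of (idx0 k) ∧
    ∀ j : Fin n, j ≠ idx0 k → j ≠ idx1 k → ρ (braidGen k) (FreeGroup.of j) = FreeGroup.of j

/-- Wada's representation of type (3):
`σ_k ↦ (x_k ↦ x_k² x_{k+1}, x_{k+1} ↦ x_{k+1}⁻¹ x_k⁻¹ x_{k+1})`. -/
def IsWada3 {n : ℕ} (ρ : BraidGroup (n - 1) →* MulAut (FreeGroup (Fin n))) : Prop :=
  ∀ k : Fin (n - 1),
    ρ (braidGen k) (FreeGroup.of (idx0 k)) =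
      FreeGroup.of (idx0 k) ^ 2 * FreeGroup.of (idx1 k) ∧
    ρ (braidGen k) (FreeGroup.of (idx1 k)) =
      (FreeGroup.of (idx1 k))⁻¹ * (FreeGroup.of (idx0 k))⁻¹ * FreeGroup.of (idx1 k) ∧
    ∀ j : Fin n, j ≠ idx0 k → j ≠ idx1 k → ρ (braidGen k) (FreeGroup.of j) = FreeGroup.of j

/-- Two representations `ρ, ρ' : B → Aut G` are equivalent if there are automorphisms
`φ : G → G` and `μ : B → B` with `ρ'(μ(β)) = φ⁻¹ ∘ ρ(β) ∘ φ` for all `β`. -/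
def EquivReps {B G : Type*} [Group B] [Group G] (ρ ρ' : B →* MulAut G) : Prop :=
  ∃ (φ : G ≃* G) (μ : B ≃* B), ∀ (β : B) (g : G), ρ' (μ β) g = φ.symm (ρ β (φ g))

/-- `yⱼ = x₁² x₂² ⋯ x_{j-1}² x_j` (0-indexed: `y j = x_0² ⋯ x_{j-1}² x_j`). -/
def wadaY {n : ℕ} (j : Fin n) : FreeGroup (Fin n) :=
  ((((List.finRange n).take (j : ℕ)).map (fun t => (FreeGroup.of t) ^ 2)).prod) * FreeGroup.of j

-- relations hold
lemma braid_rel1 {m : ℕ} (i j : Fin m) (h : (i:ℕ) + 1 = j) :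
    braidGen i * braidGen j * braidGen i = braidGen j * braidGen i * braidGen j := by
  have hr : (FreeGroup.of i * FreeGroup.of j * FreeGroup.of i *
      (FreeGroup.of j * FreeGroup.of i * FreeGroup.of j)⁻¹) ∈ braidRels m :=
    Or.inl ⟨i, j, h, rfl⟩
  have : PresentedGroup.mk (braidRels m) (FreeGroup.of i * FreeGroup.of j * FreeGroup.of i *
      (FreeGroup.of j * FreeGroup.of i * FreeGroup.of j)⁻¹) = 1 := by
    apply (QuotientGroup.eq_one_iff _).2
    exact Subgroup.subset_normalClosure hr
  rw [map_mul, map_inv, map_mul, map_mul, map_mul, map_mul, mul_inv_eq_one] at this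
  exact this

lemma braid_rel2 {m : ℕ} (i j : Fin m) (h : (i:ℕ) + 2 ≤ j) :
    braidGen i * braidGen j = braidGen j * braidGen i := by
  have hr : (FreeGroup.of i * FreeGroup.of j * (FreeGroup.of j * FreeGroup.of i)⁻¹) ∈ braidRels m :=
    Or.inr ⟨i, j, h, rfl⟩
  have : PresentedGroup.mk (braidRels m) (FreeGroup.of i * FreeGroup.of j *
      (FreeGroup.of j * FreeGroup.of i)⁻¹) = 1 := by
    apply (QuotientGroup.eq_one_iff _).2
    exact Subgroup.subset_normalClosure hr
  rw [map_mul, map_inv, map_mul, map_mul, mul_inv_eq_one] at this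
  exact this

lemma rev_rels {m : ℕ} : ∀ r ∈ braidRels m,
    FreeGroup.lift (fun i : Fin m => braidGen i.rev) r = 1 := by
  rintro r (⟨i, j, hij, rfl⟩ | ⟨i, j, hij, rfl⟩)
  · simp only [map_mul, map_inv, FreeGroup.lift_apply_of, mul_inv_eq_one]
    have : (j.rev : ℕ) + 1 = i.rev := by
      have hi := i.2; have hj := j.2
      simp [Fin.rev]; omega
    have := braid_rel1 j.rev i.rev this
    rw [this]
  · simp only [map_mul, map_inv, FreeGroup.lift_apply_of, mul_inv_eq_one]
    have : (j.rev : ℕ) + 2 ≤ i.rev := by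
      have hi := i.2; have hj := j.2
      simp [Fin.rev]; omega
    have := braid_rel2 j.rev i.rev this
    rw [this]

def revHom {m : ℕ} : BraidGroup m →* BraidGroup m := PresentedGroup.toGroup rev_rels

@[simp] lemma revHom_gen {m : ℕ} (k : Fin m) : revHom (braidGen k) = braidGen k.rev :=
  PresentedGroup.toGroup.of rev_rels

def braidRev (m : ℕ) : BraidGroup m ≃* BraidGroup m :=
  MonoidHom.toMulEquiv revHom revHom
    (by ext x; show revHom (revHom (braidGen x)) = braidGen x; simp)
    (by ext x; show revHom (revHom (braidGen x)) = braidGen x; simp)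


namespace WadaAux

def Pfun (n i : ℕ) : FreeGroup (Fin n) :=
  (((List.finRange n).take i).map (fun t => (FreeGroup.of t) ^ 2)).prod

lemma wadaY_eq {n : ℕ} (j : Fin n) : wadaY j = Pfun n j.1 * FreeGroup.of j := rfl

@[simp] lemma Pfun_zero {n : ℕ} : Pfun n 0 = 1 := rfl

lemma Pfun_succ {n i : ℕ} (h : i < n) :
    Pfun n (i+1) = Pfun n i * (FreeGroup.of (⟨i, h⟩ : Fin n)) ^ 2 := by
  unfold Pfun
  rw [List.take_succ]
  have : (List.finRange n)[i]? = some ⟨i, h⟩ := by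
    rw [List.getElem?_eq_getElem (by simpa using h)]
    simp
  rw [this]
  simp

def Xg (n j : ℕ) : FreeGroup (Fin n) := if h : j < n then FreeGroup.of ⟨j, h⟩ else 1

def qseq (n : ℕ) : ℕ → FreeGroup (Fin n)
  | 0 => 1
  | j+1 => Xg n j * (qseq n j)⁻¹ * Xg n j

def Yhom (n : ℕ) : FreeGroup (Fin n) →* FreeGroup (Fin n) :=
  FreeGroup.lift wadaY

def Zhom (n : ℕ) : FreeGroup (Fin n) →* FreeGroup (Fin n) :=
  FreeGroup.lift (fun j : Fin n => (qseq n j.1)⁻¹ * FreeGroup.of j)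

@[simp] lemma Yhom_of {n : ℕ} (j : Fin n) : Yhom n (FreeGroup.of j) = wadaY j :=
  FreeGroup.lift_apply_of

@[simp] lemma Zhom_of {n : ℕ} (j : Fin n) :
    Zhom n (FreeGroup.of j) = (qseq n j.1)⁻¹ * FreeGroup.of j :=
  FreeGroup.lift_apply_of

lemma qseq_succ {n j : ℕ} : qseq n (j+1) = Xg n j * (qseq n j)⁻¹ * Xg n j := rfl

lemma Y_q {n : ℕ} : ∀ i, i ≤ n → Yhom n (qseq n i) = Pfun n i := by
  intro i
  induction i with
  | zero => intro _; show Yhom n 1 = 1; simp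
  | succ j ih =>
      intro hle
      have hj : j < n := by omega
      show Yhom n (Xg n j * (qseq n j)⁻¹ * Xg n j) = _
      have hX : Xg n j = FreeGroup.of (⟨j, hj⟩ : Fin n) := dif_pos hj
      rw [hX, _root_.map_mul, _root_.map_mul, map_inv, ih (by omega), Yhom_of,
        wadaY_eq, Pfun_succ hj, sq]
      simp only [Fin.val_mk]
      group

lemma Z_P {n : ℕ} : ∀ i, i ≤ n → Zhom n (Pfun n i) = qseq n i := by
  intro i
  induction i with
  | zero => intro _; show Zhom n 1 = 1; simp
  | succ j ih =>
      intro hle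
      have hj : j < n := by omega
      have hX : Xg n j = FreeGroup.of (⟨j, hj⟩ : Fin n) := dif_pos hj
      rw [Pfun_succ hj, _root_.map_mul, map_pow, ih (by omega), Zhom_of, qseq_succ, hX, sq]
      group

lemma ZY {n : ℕ} : (Zhom n).comp (Yhom n) = MonoidHom.id _ := by
  apply FreeGroup.ext_hom
  intro a
  show Zhom n (Yhom n (FreeGroup.of a)) = FreeGroup.of a
  rw [Yhom_of, wadaY_eq, _root_.map_mul, Z_P a.1 (le_of_lt a.2), Zhom_of]
  group

lemma YZ {n : ℕ} : (Yhom n).comp (Zhom n) = MonoidHom.id _ := by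
  apply FreeGroup.ext_hom
  intro a
  show Yhom n (Zhom n (FreeGroup.of a)) = FreeGroup.of a
  rw [Zhom_of, _root_.map_mul, map_inv, Y_q a.1 (le_of_lt a.2), Yhom_of, wadaY_eq]
  group

def Yequiv (n : ℕ) : FreeGroup (Fin n) ≃* FreeGroup (Fin n) :=
  MonoidHom.toMulEquiv (Yhom n) (Zhom n) ZY YZ

@[simp] lemma Yequiv_of {n : ℕ} (j : Fin n) : Yequiv n (FreeGroup.of j) = wadaY j :=
  FreeGroup.lift_apply_of

def phiEquiv (n : ℕ) : FreeGroup (Fin n) ≃* FreeGroup (Fin n) :=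
  (FreeGroup.freeGroupCongr (finCongr rfl)).trans (Yequiv n)

end WadaAux

namespace WadaAux

def XA (m b : ℕ) (hb : b + 1 < m) : FreeGroup (Fin m) := FreeGroup.of ⟨b, by omega⟩
def XB (m b : ℕ) (hb : b + 1 < m) : FreeGroup (Fin m) := FreeGroup.of ⟨b + 1, hb⟩

section Rho3
variable {n : ℕ} (ρ : MulAut (FreeGroup (Fin n))) (a : ℕ) (ha : a + 1 < n)
  (hA : ρ (XA n a ha) = XA n a ha ^ 2 * XB n a ha)
  (hB : ρ (XB n a ha) = (XB n a ha)⁻¹ * (XA n a ha)⁻¹ * XB n a ha)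
  (hC : ∀ j : Fin n, j.1 ≠ a → j.1 ≠ a + 1 → ρ (FreeGroup.of j) = FreeGroup.of j)

include ha hA hB hC

lemma fixP_le : ∀ i, i ≤ a → ρ (Pfun n i) = Pfun n i := by
  intro i
  induction i with
  | zero => intro _; simp
  | succ j ih =>
    intro hle
    have hj : j < n := by omega
    rw [Pfun_succ hj, map_mul, map_pow, ih (by omega), hC ⟨j, hj⟩ (by simp; omega) (by simp; omega)]

lemma rho_P_a1 : ρ (Pfun n (a+1)) = Pfun n a * (XA n a ha ^ 2 * XB n a ha) ^ 2 := by
  rw [Pfun_succ (by omega : a < n), map_mul, map_pow, fixP_le ρ a ha hA hB hC a le_rfl]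
  rw [show FreeGroup.of (⟨a, by omega⟩ : Fin n) = XA n a ha from rfl, hA]

lemma rho_P_a2 : ρ (Pfun n (a+2)) = Pfun n (a+2) := by
  rw [Pfun_succ (by omega : a + 1 < n), map_mul, map_pow, rho_P_a1 ρ a ha hA hB hC,
    show FreeGroup.of (⟨a+1, by omega⟩ : Fin n) = XB n a ha from rfl, hB,
    Pfun_succ (by omega : a < n),
    show FreeGroup.of (⟨a, by omega⟩ : Fin n) = XA n a ha from rfl]
  simp only [sq]
  group

lemma fixP_ge : ∀ i, a + 2 ≤ i → i ≤ n → ρ (Pfun n i) = Pfun n i := by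
  intro i
  induction i with
  | zero => omega
  | succ j ih =>
    intro h2 hle
    rcases Nat.eq_or_lt_of_le h2 with h | h
    · rw [← h]; exact rho_P_a2 ρ a ha hA hB hC
    · have hj : j < n := by omega
      rw [Pfun_succ hj, map_mul, map_pow, ih (by omega) (by omega),
        hC ⟨j, hj⟩ (by simp; omega) (by simp; omega)]

lemma rho_y_fix (j : Fin n) (h : j.1 < a ∨ a + 2 ≤ j.1) : ρ (wadaY j) = wadaY j := by
  rw [wadaY_eq, map_mul, hC j (by omega) (by omega)]
  rcases h with h | h
  · rw [fixP_le ρ a ha hA hB hC j.1 (by omega)]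
  · rw [fixP_ge ρ a ha hA hB hC j.1 h (le_of_lt j.2)]

lemma rho_y_A : ρ (wadaY ⟨a, by omega⟩) = wadaY ⟨a+1, ha⟩ := by
  simp only [wadaY_eq, Fin.val_mk]
  rw [map_mul, fixP_le ρ a ha hA hB hC a le_rfl,
    show FreeGroup.of (⟨a, by omega⟩ : Fin n) = XA n a ha from rfl, hA,
    Pfun_succ (by omega : a < n),
    show FreeGroup.of (⟨a+1, ha⟩ : Fin n) = XB n a ha from rfl,
    show FreeGroup.of (⟨a, by omega⟩ : Fin n) = XA n a ha from rfl]
  group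

lemma rho_y_B : ρ (wadaY ⟨a+1, ha⟩) =
    wadaY ⟨a+1, ha⟩ * (wadaY ⟨a, by omega⟩)⁻¹ * wadaY ⟨a+1, ha⟩ := by
  simp only [wadaY_eq, Fin.val_mk]
  rw [map_mul, show FreeGroup.of (⟨a+1, ha⟩ : Fin n) = XB n a ha from rfl, hB,
    rho_P_a1 ρ a ha hA hB hC, Pfun_succ (by omega : a < n),
    show FreeGroup.of (⟨a, by omega⟩ : Fin n) = XA n a ha from rfl]
  simp only [sq]
  group

end Rho3
end WadaAux

namespace WadaAux

def phi (n : ℕ) : FreeGroup (Fin n) ≃* FreeGroup (Fin n) :=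
  (FreeGroup.freeGroupCongr Fin.revPerm).trans (Yequiv n)

@[simp] lemma phi_of {n : ℕ} (i : Fin n) : phi n (FreeGroup.of i) = wadaY i.rev := by
  simp [phi, FreeGroup.freeGroupCongr_apply, FreeGroup.map.of]

lemma mulAut_ext {n : ℕ} (e1 e2 : MulAut (FreeGroup (Fin n)))
    (h : ∀ j, e1 (FreeGroup.of j) = e2 (FreeGroup.of j)) : e1 = e2 := by
  have := FreeGroup.ext_hom (e1 : FreeGroup (Fin n) →* FreeGroup (Fin n)) e2 h
  ext g
  exact DFunLike.congr_fun this g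

end WadaAux

namespace WadaAux

lemma key {n : ℕ} (hn : 2 ≤ n) (ρ₂ ρ₃ : BraidGroup (n-1) →* MulAut (FreeGroup (Fin n)))
    (hρ₂ : IsWada2 ρ₂) (hρ₃ : IsWada3 ρ₃) (k : Fin (n-1)) (j : Fin n) :
    phi n (ρ₂ (braidGen k.rev) (FreeGroup.of j)) = ρ₃ (braidGen k) (phi n (FreeGroup.of j)) := by
  have hk := k.2
  have ha' : k.1 + 1 < n := by omega
  obtain ⟨h3A, h3B, h3C⟩ := hρ₃ k
  obtain ⟨h2A, h2B, h2C⟩ := hρ₂ k.rev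
  have hA : ρ₃ (braidGen k) (XA n k.1 ha') = XA n k.1 ha' ^ 2 * XB n k.1 ha' := h3A
  have hB : ρ₃ (braidGen k) (XB n k.1 ha') =
      (XB n k.1 ha')⁻¹ * (XA n k.1 ha')⁻¹ * XB n k.1 ha' := h3B
  have hC : ∀ i : Fin n, i.1 ≠ k.1 → i.1 ≠ k.1 + 1 →
      ρ₃ (braidGen k) (FreeGroup.of i) = FreeGroup.of i := by
    intro i h1 h2
    exact h3C i (fun e => h1 (congrArg Fin.val e)) (fun e => h2 (congrArg Fin.val e))
  have hbv : (idx0 k.rev).1 = n - 1 - (k.1 + 1) := by simp [idx0, Fin.val_rev]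
  have hbv1 : (idx1 k.rev).1 = n - 1 - (k.1 + 1) + 1 := by simp [idx1, Fin.val_rev]
  by_cases hj1 : j = idx0 k.rev
  · subst hj1
    rw [h2A, map_mul, map_mul, map_inv, phi_of, phi_of]
    have e1 : (idx0 k.rev).rev = (⟨k.1 + 1, ha'⟩ : Fin n) := by
      apply Fin.ext; rw [Fin.val_rev, hbv]; simp only [Fin.val_mk]; omega
    have e2 : (idx1 k.rev).rev = (⟨k.1, by omega⟩ : Fin n) := by
      apply Fin.ext; rw [Fin.val_rev, hbv1]; simp only [Fin.val_mk]; omega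
    rw [e1, e2, rho_y_B (ρ₃ (braidGen k)) k.1 ha' hA hB hC]
  · by_cases hj2 : j = idx1 k.rev
    · subst hj2
      rw [h2B, phi_of, phi_of]
      have e1 : (idx0 k.rev).rev = (⟨k.1 + 1, ha'⟩ : Fin n) := by
        apply Fin.ext; rw [Fin.val_rev, hbv]; simp only [Fin.val_mk]; omega
      have e2 : (idx1 k.rev).rev = (⟨k.1, by omega⟩ : Fin n) := by
        apply Fin.ext; rw [Fin.val_rev, hbv1]; simp only [Fin.val_mk]; omega
      rw [e1, e2, rho_y_A (ρ₃ (braidGen k)) k.1 ha' hA hB hC]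
    · rw [h2C j hj1 hj2, phi_of]
      have hv1 : j.1 ≠ (idx0 k.rev).1 := fun e => hj1 (Fin.ext e)
      have hv2 : j.1 ≠ (idx1 k.rev).1 := fun e => hj2 (Fin.ext e)
      rw [hbv] at hv1
      have hv2' : j.1 ≠ n - 1 - (k.1 + 1) + 1 := by simpa [idx1, hbv] using hv2
      have hj := j.2
      refine (rho_y_fix (ρ₃ (braidGen k)) k.1 ha' hA hB hC j.rev ?_).symm
      rw [Fin.val_rev]
      omega

end WadaAux


theorem wada2_equiv_wada3 (n : ℕ) (hn : 2 ≤ n)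
    (ρ₂ ρ₃ : BraidGroup (n - 1) →* MulAut (FreeGroup (Fin n)))
    (hρ₂ : IsWada2 ρ₂) (hρ₃ : IsWada3 ρ₃) :
    ∃ (φ : FreeGroup (Fin n) ≃* FreeGroup (Fin n))
      (μ : BraidGroup (n - 1) ≃* BraidGroup (n - 1)),
      (∀ i : Fin n, φ (FreeGroup.of i) = wadaY i.rev) ∧
      (∀ k : Fin (n - 1), μ (braidGen k) = braidGen k.rev) ∧
      ∀ (β : BraidGroup (n - 1)) (g : FreeGroup (Fin n)),
        ρ₂ (μ β) g = φ.symm (ρ₃ β (φ g)) := by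
  refine ⟨WadaAux.phi n, braidRev (n-1), fun i => WadaAux.phi_of i, fun k => revHom_gen k, ?_⟩
  have H : ρ₂.comp (braidRev (n-1)).toMonoidHom
      = (MulAut.congr (WadaAux.phi n).symm).toMonoidHom.comp ρ₃ := by
    refine PresentedGroup.ext fun x => ?_
    apply WadaAux.mulAut_ext
    intro j
    have lhs : ρ₂.comp (braidRev (n-1)).toMonoidHom (PresentedGroup.of x)
        = ρ₂ (braidGen x.rev) := by
      exact congrArg ρ₂ (revHom_gen x)
    rw [lhs]
    show ρ₂ (braidGen x.rev) (FreeGroup.of j)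
        = (MulAut.congr (WadaAux.phi n).symm) (ρ₃ (braidGen x)) (FreeGroup.of j)
    have : (MulAut.congr (WadaAux.phi n).symm) (ρ₃ (braidGen x)) (FreeGroup.of j)
        = (WadaAux.phi n).symm (ρ₃ (braidGen x) (WadaAux.phi n (FreeGroup.of j))) := by
      simp [MulAut.congr]
    rw [this]
    exact (MulEquiv.eq_symm_apply _).2 (WadaAux.key hn ρ₂ ρ₃ hρ₂ hρ₃ x j)
  intro β g
  have h1 := DFunLike.congr_fun H β
  simp only [MonoidHom.comp_apply, MulEquiv.coe_toMonoidHom] at h1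
  have h2 := DFunLike.congr_fun h1 g
  simpa [MulAut.congr] using h2
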